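/- Let n ≥ 1, let s_1, ..., s_n be pairwise distinct complex numbers, let x_{ji} ∈ ℂ be arbitrary for 1 ≤ i < j ≤ n, and let M and N = M^{−1} be the lower unitriangular matrices built from the chain sums with constants c and c' respectively (as below). Let D = diag(s_1, ..., s_n). Then the matrix N · D · M has entries (N D M)_{ii} = s_i, (N D M)_{ji} = (s_j − s_i) · x_{ji} for i < j, and (N D M)_{ji} = 0 for i > j. -/

import Mathlib

open Finset

/-- The product of `f a b` over consecutive pairs `(a, b)` of the list `L`
(the empty product being `1`). -/
def consecPairsProd {α : Type*} (f : α → α → ℂ) (L : List α) : ℂ :=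
  ((L.zip L.tail).map fun p => f p.1 p.2).prod

variable {n : ℕ}

lemma consecPairsProd_cons {α : Type*} (f : α → α → ℂ) (a b : α) (l : List α) :
    consecPairsProd f (a :: b :: l) = f a b * consecPairsProd f (b :: l) := by
  simp [consecPairsProd]

lemma consecPairsProd_concat₂ {α : Type*} (f : α → α → ℂ) (a c : α) :
    ∀ l : List α, consecPairsProd f (l ++ [a, c]) = consecPairsProd f (l ++ [a]) * f a c
  | [] => by simp [consecPairsProd]
  | [d] => by simp [consecPairsProd]
  | d :: e :: l => by
      rw [show (d :: e :: l) ++ [a, c] = d :: (e :: (l ++ [a, c])) from rfl,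
        consecPairsProd_cons,
        show e :: (l ++ [a, c]) = (e :: l) ++ [a, c] from rfl,
        consecPairsProd_concat₂ f a c (e :: l),
        show (d :: e :: l) ++ [a] = d :: (e :: (l ++ [a])) from rfl,
        consecPairsProd_cons,
        show e :: (l ++ [a]) = (e :: l) ++ [a] from rfl]
      ring

variable {n : ℕ}

lemma sort_cons_min {S : Finset (Fin n)} {b : Fin n} (hb : b ∈ S) (hmin : ∀ a ∈ S, b ≤ a) :
    S.sort (· ≤ ·) = b :: (S.erase b).sort (· ≤ ·) := by
  conv_lhs => rw [← Finset.insert_erase hb]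
  exact Finset.sort_insert _ (fun c hc => hmin c (Finset.mem_of_mem_erase hc))
    (Finset.notMem_erase _ _)

lemma sort_concat_max {S : Finset (Fin n)} {b : Fin n} (hb : b ∈ S) (hmax : ∀ a ∈ S, a ≤ b) :
    S.sort (· ≤ ·) = (S.erase b).sort (· ≤ ·) ++ [b] := by
  apply List.Perm.eq_of_pairwise' (Finset.pairwise_sort _ _) ?_ ?_
  · refine List.pairwise_append.mpr ⟨Finset.pairwise_sort _ _, List.pairwise_singleton _ _,
      fun x hx y hy => ?_⟩
    rw [List.mem_singleton] at hy
    subst hy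
    exact hmax x (Finset.mem_of_mem_erase ((Finset.mem_sort _).mp hx))
  · have h1 : S.toList.Perm (b :: (S.erase b).toList) := by
      conv_lhs => rw [← Finset.insert_erase hb]
      exact Finset.toList_insert (Finset.notMem_erase _ _)
    exact ((Finset.sort_perm_toList _ _).trans h1).trans
      (((Finset.sort_perm_toList _ _).symm.cons b).trans
        (List.perm_append_singleton _ _).symm)

/-- The sum over all strictly increasing chains `i = i_1 < i_2 < ... < i_k = j` in `Fin n`
(equivalently, over all subsets `T` of the open interval `(i, j)`, the chain being the sorted
list of `{i} ∪ T ∪ {j}`) of the product of `f` over consecutive pairs of the chain. -/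
noncomputable def chainSum {n : ℕ} (f : Fin n → Fin n → ℂ) (i j : Fin n) : ℂ :=
  ∑ T ∈ (Finset.Ioo i j).powerset,
    consecPairsProd f ((insert i (insert j T)).sort (· ≤ ·))

lemma key1 (f : Fin n → Fin n → ℂ) {i b : Fin n} {S : Finset (Fin n)}
    (hi : ∀ a ∈ S, i < a) (hb : b ∈ S) (hmin : ∀ a ∈ S, b ≤ a) :
    consecPairsProd f ((insert i S).sort (· ≤ ·)) =
      f i b * consecPairsProd f (S.sort (· ≤ ·)) := by
  have hiS : i ∉ S := fun h => lt_irrefl i (hi i h)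
  rw [Finset.sort_insert _ (fun c hc => (hi c hc).le) hiS, sort_cons_min hb hmin,
    consecPairsProd_cons]

lemma key2 (f : Fin n → Fin n → ℂ) {j b : Fin n} {S : Finset (Fin n)}
    (hj : ∀ a ∈ S, a < j) (hb : b ∈ S) (hmax : ∀ a ∈ S, a ≤ b) :
    consecPairsProd f ((insert j S).sort (· ≤ ·)) =
      consecPairsProd f (S.sort (· ≤ ·)) * f b j := by
  have hjS : j ∉ S := fun h => lt_irrefl j (hj j h)
  have hbS : b ∈ insert j S := Finset.mem_insert_of_mem hb
  have e1 : (insert j S).sort (· ≤ ·) = S.sort (· ≤ ·) ++ [j] := by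
    have := sort_concat_max (S := insert j S) (b := j) (Finset.mem_insert_self _ _)
      (fun a ha => by
        rcases Finset.mem_insert.mp ha with h | h
        · exact h.le
        · exact (hj a h).le)
    rwa [Finset.erase_insert hjS] at this
  have e2 : S.sort (· ≤ ·) = (S.erase b).sort (· ≤ ·) ++ [b] := sort_concat_max hb hmax
  rw [e1, e2, List.append_assoc, show [b] ++ [j] = [b, j] from rfl, consecPairsProd_concat₂,
    ← e2]

lemma chainSum_self (f : Fin n → Fin n → ℂ) (i : Fin n) : chainSum f i i = 1 := by
  simp [chainSum, consecPairsProd]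

lemma chainSum_rec_left (f : Fin n → Fin n → ℂ) {i j : Fin n} (hij : i < j) :
    chainSum f i j = ∑ b ∈ Ioc i j, f i b * chainSum f b j := by
  have hrhs : ∑ b ∈ Ioc i j, f i b * chainSum f b j
      = ∑ p ∈ (Ioc i j).sigma (fun b => (Ioo b j).powerset),
          f i p.1 * consecPairsProd f ((insert p.1 (insert j p.2)).sort (· ≤ ·)) := by
    rw [Finset.sum_sigma]
    exact Finset.sum_congr rfl fun b _ => by rw [chainSum, Finset.mul_sum]
  rw [hrhs, chainSum]
  symm
  apply Finset.sum_nbij' (i := fun p => (insert p.1 p.2).erase j)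
    (j := fun T => ⟨(insert j T).min' (Finset.insert_nonempty _ _),
      T.erase ((insert j T).min' (Finset.insert_nonempty _ _))⟩)
  · -- φ p ∈ powerset (Ioo i j)
    rintro ⟨b, T'⟩ hp
    rw [Finset.mem_sigma, Finset.mem_Ioc, Finset.mem_powerset] at hp
    obtain ⟨⟨hib, hbj⟩, hT'⟩ := hp
    rw [Finset.mem_powerset]
    intro t ht
    rw [Finset.mem_erase, Finset.mem_insert] at ht
    obtain ⟨htj, ht⟩ := ht
    rcases ht with rfl | ht
    · exact Finset.mem_Ioo.mpr ⟨hib, lt_of_le_of_ne hbj htj⟩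
    · have := Finset.mem_Ioo.mp (hT' ht)
      exact Finset.mem_Ioo.mpr ⟨hib.trans this.1, this.2⟩
  · -- ψ T ∈ sigma
    intro T hT
    rw [Finset.mem_powerset] at hT
    set m := (insert j T).min' (Finset.insert_nonempty _ _) with hm
    have hmmem : m ∈ insert j T := Finset.min'_mem _ _
    have hmj : m ≤ j := Finset.min'_le _ _ (Finset.mem_insert_self _ _)
    have him : i < m := by
      rcases Finset.mem_insert.mp hmmem with h | h
      · rw [h]; exact hij
      · exact (Finset.mem_Ioo.mp (hT h)).1
    rw [Finset.mem_sigma, Finset.mem_Ioc, Finset.mem_powerset]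
    refine ⟨⟨him, hmj⟩, fun t ht => ?_⟩
    rw [Finset.mem_erase] at ht
    obtain ⟨htm, ht⟩ := ht
    exact Finset.mem_Ioo.mpr ⟨lt_of_le_of_ne (Finset.min'_le _ _ (Finset.mem_insert_of_mem ht))
      (Ne.symm htm), (Finset.mem_Ioo.mp (hT ht)).2⟩
  · -- left inverse : ψ (φ p) = p
    rintro ⟨b, T'⟩ hp
    rw [Finset.mem_sigma, Finset.mem_Ioc, Finset.mem_powerset] at hp
    obtain ⟨⟨hib, hbj⟩, hT'⟩ := hp
    have hjT' : j ∉ T' := fun h => lt_irrefl j (Finset.mem_Ioo.mp (hT' h)).2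
    have hbT' : b ∉ T' := fun h => lt_irrefl b (Finset.mem_Ioo.mp (hT' h)).1
    set E := (insert b T').erase j with hE
    have hmin : (insert j E).min' (Finset.insert_nonempty _ _) = b := by
      apply le_antisymm
      · apply Finset.min'_le
        rcases eq_or_lt_of_le hbj with rfl | hblt
        · exact Finset.mem_insert_self _ _
        · exact Finset.mem_insert_of_mem (Finset.mem_erase.mpr ⟨hblt.ne,
            Finset.mem_insert_self _ _⟩)
      · apply Finset.le_min'
        intro y hy
        rcases Finset.mem_insert.mp hy with rfl | hy
        · exact hbj
        · rcases Finset.mem_insert.mp (Finset.mem_of_mem_erase hy) with rfl | hy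
          · exact le_rfl
          · exact (Finset.mem_Ioo.mp (hT' hy)).1.le
    refine Sigma.ext hmin (heq_of_eq ?_)
    rw [hmin]
    rcases eq_or_lt_of_le hbj with rfl | hblt
    · -- b = j : T' = ∅
      have : T' = ∅ := by
        rw [← Finset.subset_empty, ← Finset.Ioo_self b]; exact hT'
      subst this
      simp [hE]
    · have : E = insert b T' := by
        rw [hE]
        apply Finset.erase_eq_of_notMem
        rw [Finset.mem_insert]
        push_neg
        exact ⟨hblt.ne', hjT'⟩
      rw [this, Finset.erase_insert hbT']
  · -- right inverse : φ (ψ T) = T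
    intro T hT
    rw [Finset.mem_powerset] at hT
    have hjT : j ∉ T := fun h => lt_irrefl j (Finset.mem_Ioo.mp (hT h)).2
    rcases T.eq_empty_or_nonempty with rfl | ⟨t, ht⟩
    · simp
    · have hmT : (insert j T).min' (Finset.insert_nonempty _ _) ∈ T := by
        rcases Finset.mem_insert.mp
          ((insert j T).min'_mem (Finset.insert_nonempty _ _)) with h | h
        · exfalso
          have h1 : (insert j T).min' (Finset.insert_nonempty _ _) ≤ t :=
            Finset.min'_le _ _ (Finset.mem_insert_of_mem ht)
          rw [h] at h1
          exact absurd ((Finset.mem_Ioo.mp (hT ht)).2) (not_lt.mpr h1)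
        · exact h
      simp only
      rw [Finset.insert_erase hmT, Finset.erase_eq_of_notMem hjT]
  · -- terms agree
    rintro ⟨b, T'⟩ hp
    rw [Finset.mem_sigma, Finset.mem_Ioc, Finset.mem_powerset] at hp
    obtain ⟨⟨hib, hbj⟩, hT'⟩ := hp
    have hjT' : j ∉ T' := fun h => lt_irrefl j (Finset.mem_Ioo.mp (hT' h)).2
    simp only
    have hset : insert j ((insert b T').erase j) = insert b (insert j T') := by
      rcases eq_or_lt_of_le hbj with rfl | hblt
      · have : T' = ∅ := by
          rw [← Finset.subset_empty, ← Finset.Ioo_self b]; exact hT'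
        subst this
        simp
      · rw [Finset.erase_eq_of_notMem (by
          rw [Finset.mem_insert]; push_neg; exact ⟨hblt.ne', hjT'⟩), Finset.insert_comm]
    rw [show insert i (insert j ((insert b T').erase j))
        = insert i (insert b (insert j T')) by rw [hset]]
    rw [key1 f (i := i) (b := b) (S := insert b (insert j T'))
      (fun a ha => by
        rcases Finset.mem_insert.mp ha with rfl | ha
        · exact hib
        · rcases Finset.mem_insert.mp ha with rfl | ha
          · exact hij
          · exact hib.trans (Finset.mem_Ioo.mp (hT' ha)).1)
      (Finset.mem_insert_self _ _)
      (fun a ha => by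
        rcases Finset.mem_insert.mp ha with rfl | ha
        · exact le_rfl
        · rcases Finset.mem_insert.mp ha with rfl | ha
          · exact hbj
          · exact (Finset.mem_Ioo.mp (hT' ha)).1.le)]

lemma chainSum_rec_right (f : Fin n → Fin n → ℂ) {i j : Fin n} (hij : i < j) :
    chainSum f i j = ∑ a ∈ Ico i j, chainSum f i a * f a j := by
  have hrhs : ∑ a ∈ Ico i j, chainSum f i a * f a j
      = ∑ p ∈ (Ico i j).sigma (fun a => (Ioo i a).powerset),
          consecPairsProd f ((insert i (insert p.1 p.2)).sort (· ≤ ·)) * f p.1 j := by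
    rw [Finset.sum_sigma]
    exact Finset.sum_congr rfl fun a _ => by rw [chainSum, Finset.sum_mul]
  rw [hrhs, chainSum]
  symm
  apply Finset.sum_nbij' (i := fun p => (insert p.1 p.2).erase i)
    (j := fun T => ⟨(insert i T).max' (Finset.insert_nonempty _ _),
      T.erase ((insert i T).max' (Finset.insert_nonempty _ _))⟩)
  · -- φ p ∈ powerset (Ioo i j)
    rintro ⟨a, T'⟩ hp
    rw [Finset.mem_sigma, Finset.mem_Ico, Finset.mem_powerset] at hp
    obtain ⟨⟨hia, haj⟩, hT'⟩ := hp
    rw [Finset.mem_powerset]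
    intro t ht
    rw [Finset.mem_erase, Finset.mem_insert] at ht
    obtain ⟨hti, ht⟩ := ht
    rcases ht with rfl | ht
    · exact Finset.mem_Ioo.mpr ⟨lt_of_le_of_ne hia (Ne.symm hti), haj⟩
    · have := Finset.mem_Ioo.mp (hT' ht)
      exact Finset.mem_Ioo.mpr ⟨this.1, this.2.trans haj⟩
  · -- ψ T ∈ sigma
    intro T hT
    rw [Finset.mem_powerset] at hT
    set m := (insert i T).max' (Finset.insert_nonempty _ _) with hm
    have hmmem : m ∈ insert i T := Finset.max'_mem _ _
    have him : i ≤ m := Finset.le_max' _ _ (Finset.mem_insert_self _ _)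
    have hmj : m < j := by
      rcases Finset.mem_insert.mp hmmem with h | h
      · rw [h]; exact hij
      · exact (Finset.mem_Ioo.mp (hT h)).2
    rw [Finset.mem_sigma, Finset.mem_Ico, Finset.mem_powerset]
    refine ⟨⟨him, hmj⟩, fun t ht => ?_⟩
    rw [Finset.mem_erase] at ht
    obtain ⟨htm, ht⟩ := ht
    exact Finset.mem_Ioo.mpr ⟨(Finset.mem_Ioo.mp (hT ht)).1,
      lt_of_le_of_ne (Finset.le_max' _ _ (Finset.mem_insert_of_mem ht)) htm⟩
  · -- left inverse : ψ (φ p) = p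
    rintro ⟨a, T'⟩ hp
    rw [Finset.mem_sigma, Finset.mem_Ico, Finset.mem_powerset] at hp
    obtain ⟨⟨hia, haj⟩, hT'⟩ := hp
    have hiT' : i ∉ T' := fun h => lt_irrefl i (Finset.mem_Ioo.mp (hT' h)).1
    have haT' : a ∉ T' := fun h => lt_irrefl a (Finset.mem_Ioo.mp (hT' h)).2
    set E := (insert a T').erase i with hE
    have hmax : (insert i E).max' (Finset.insert_nonempty _ _) = a := by
      apply le_antisymm
      · apply Finset.max'_le
        intro y hy
        rcases Finset.mem_insert.mp hy with rfl | hy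
        · exact hia
        · rcases Finset.mem_insert.mp (Finset.mem_of_mem_erase hy) with rfl | hy
          · exact le_rfl
          · exact (Finset.mem_Ioo.mp (hT' hy)).2.le
      · apply Finset.le_max'
        rcases eq_or_lt_of_le hia with rfl | hlt
        · exact Finset.mem_insert_self _ _
        · exact Finset.mem_insert_of_mem (Finset.mem_erase.mpr ⟨hlt.ne',
            Finset.mem_insert_self _ _⟩)
    refine Sigma.ext hmax (heq_of_eq ?_)
    rw [hmax]
    rcases eq_or_lt_of_le hia with rfl | hlt
    · have : T' = ∅ := by
        rw [← Finset.subset_empty, ← Finset.Ioo_self i]; exact hT'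
      subst this
      simp [hE]
    · have : E = insert a T' := by
        rw [hE]
        apply Finset.erase_eq_of_notMem
        rw [Finset.mem_insert]
        push_neg
        exact ⟨hlt.ne, hiT'⟩
      rw [this, Finset.erase_insert haT']
  · -- right inverse : φ (ψ T) = T
    intro T hT
    rw [Finset.mem_powerset] at hT
    have hiT : i ∉ T := fun h => lt_irrefl i (Finset.mem_Ioo.mp (hT h)).1
    rcases T.eq_empty_or_nonempty with rfl | ⟨t, ht⟩
    · simp
    · have hmT : (insert i T).max' (Finset.insert_nonempty _ _) ∈ T := by
        rcases Finset.mem_insert.mp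
          ((insert i T).max'_mem (Finset.insert_nonempty _ _)) with h | h
        · exfalso
          have h1 : t ≤ (insert i T).max' (Finset.insert_nonempty _ _) :=
            Finset.le_max' _ _ (Finset.mem_insert_of_mem ht)
          rw [h] at h1
          exact absurd ((Finset.mem_Ioo.mp (hT ht)).1) (not_lt.mpr h1)
        · exact h
      simp only
      rw [Finset.insert_erase hmT, Finset.erase_eq_of_notMem hiT]
  · -- terms agree
    rintro ⟨a, T'⟩ hp
    rw [Finset.mem_sigma, Finset.mem_Ico, Finset.mem_powerset] at hp
    obtain ⟨⟨hia, haj⟩, hT'⟩ := hp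
    have hiT' : i ∉ T' := fun h => lt_irrefl i (Finset.mem_Ioo.mp (hT' h)).1
    simp only
    have hset : insert i ((insert a T').erase i) = insert i (insert a T') := by
      rcases eq_or_lt_of_le hia with rfl | hlt
      · have : T' = ∅ := by
          rw [← Finset.subset_empty, ← Finset.Ioo_self i]; exact hT'
        subst this
        simp
      · rw [Finset.erase_eq_of_notMem (by
          rw [Finset.mem_insert]; push_neg; exact ⟨hlt.ne, hiT'⟩)]
    rw [show insert i (insert j ((insert a T').erase i))
        = insert j (insert i ((insert a T').erase i)) from Finset.insert_comm _ _ _, hset]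
    rw [key2 f (j := j) (b := a) (S := insert i (insert a T'))
      (fun c hc => by
        rcases Finset.mem_insert.mp hc with rfl | hc
        · exact hij
        · rcases Finset.mem_insert.mp hc with rfl | hc
          · exact haj
          · exact (Finset.mem_Ioo.mp (hT' hc)).2.trans haj)
      (Finset.mem_insert_of_mem (Finset.mem_insert_self _ _))
      (fun c hc => by
        rcases Finset.mem_insert.mp hc with rfl | hc
        · exact hia
        · rcases Finset.mem_insert.mp hc with rfl | hc
          · exact le_rfl
          · exact (Finset.mem_Ioo.mp (hT' hc)).2.le)]

/-- The lower unitriangular matrix `M` of the paper (Appendix B.2), with entry in row `j`,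
column `i` (for `i < j`) given by
`M_{ji} = ∑_{i = i_1 < ... < i_k = j} c(i_1,...,i_k) ∏_{l=1}^{k−1} x_{i_{l+1} i_l}`,
where `c(i_1,...,i_k) = ∏_{l=1}^{k−1} (s_{i_l} − s_{i_{l+1}})/(s_{i_l} − s_{i_k})`. -/
noncomputable def Mmat (n : ℕ) (s : Fin n → ℂ) (x : Fin n → Fin n → ℂ) :
    Matrix (Fin n) (Fin n) ℂ :=
  Matrix.of fun j i =>
    if i = j then 1
    else if i < j then chainSum (fun a b => (s a - s b) / (s a - s j) * x b a) i j
    else 0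

/-- The lower unitriangular matrix `N = M⁻¹`, defined as `M` but with `c` replaced by
`c'(i_1,...,i_k) = (−1)^{k−1} ∏_{l=1}^{k−1} (s_{i_l} − s_{i_{l+1}})/(s_{i_1} − s_{i_{l+1}})`. -/
noncomputable def Nmat (n : ℕ) (s : Fin n → ℂ) (x : Fin n → Fin n → ℂ) :
    Matrix (Fin n) (Fin n) ℂ :=
  Matrix.of fun j i =>
    if i = j then 1
    else if i < j then chainSum (fun a b => -((s a - s b) / (s i - s b)) * x b a) i j
    else 0

lemma diag_mul_Mmat (s : Fin n → ℂ) (hs : Function.Injective s) (x : Fin n → Fin n → ℂ) :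
    Matrix.diagonal s * Mmat n s x = Mmat n s x * Matrix.of (fun j i : Fin n =>
        if i = j then s i else if i < j then (s j - s i) * x j i else 0) := by
  ext j i
  rw [Matrix.diagonal_mul, Matrix.mul_apply]
  have hstep : ∀ k ∈ (univ : Finset (Fin n)),
      Mmat n s x j k * Matrix.of (fun j i : Fin n =>
          if i = j then s i else if i < j then (s j - s i) * x j i else 0) k i
        = (if k = i then Mmat n s x j i * s i else 0)
          + (if k ∈ Ioc i j then Mmat n s x j k * ((s k - s i) * x k i) else 0) := by
    intro k _
    by_cases hki : k = i
    · subst hki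
      simp [Finset.mem_Ioc]
    · rw [Matrix.of_apply, if_neg (Ne.symm hki)]
      by_cases hik : i < k
      · rw [if_neg hki, if_pos hik]
        by_cases hkj : k ≤ j
        · rw [if_pos (Finset.mem_Ioc.mpr ⟨hik, hkj⟩), zero_add]
        · have hjk : j < k := not_le.mp hkj
          rw [if_neg (by rw [Finset.mem_Ioc]; exact fun h => hkj h.2)]
          rw [show Mmat n s x j k = 0 by
            simp [Mmat, hjk.ne', not_lt.mpr hjk.le]]
          simp
      · rw [if_neg hik, if_neg hki,
          if_neg (by rw [Finset.mem_Ioc]; exact fun h => hik h.1)]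
        simp
  rw [Finset.sum_congr rfl hstep, Finset.sum_add_distrib]
  rw [Finset.sum_ite_eq' univ i (fun _ => Mmat n s x j i * s i), if_pos (Finset.mem_univ _)]
  rw [Finset.sum_ite_mem, Finset.univ_inter]
  rcases lt_trichotomy i j with hij | rfl | hji
  · have hd : s i - s j ≠ 0 := sub_ne_zero.mpr (fun h => absurd (hs h) hij.ne)
    have hMii : Mmat n s x j i
        = chainSum (fun a b => (s a - s b) / (s a - s j) * x b a) i j := by
      simp [Mmat, hij.ne, hij]
    have hMk : ∀ k ∈ Ioc i j, Mmat n s x j k * ((s k - s i) * x k i)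
        = chainSum (fun a b => (s a - s b) / (s a - s j) * x b a) k j
            * ((s k - s i) * x k i) := by
      intro k hk
      obtain ⟨hik, hkj⟩ := Finset.mem_Ioc.mp hk
      rcases eq_or_lt_of_le hkj with rfl | h
      · simp [Mmat, chainSum_self]
      · simp [Mmat, h.ne, h]
    rw [Finset.sum_congr rfl hMk, hMii, chainSum_rec_left _ hij, Finset.mul_sum,
      Finset.sum_mul, ← Finset.sum_add_distrib]
    refine Finset.sum_congr rfl fun b _ => ?_
    field_simp
    ring
  · have h1 : Mmat n s x i i = 1 := by simp [Mmat]
    rw [h1, Finset.Ioc_self, Finset.sum_empty]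
    ring
  · have h0 : Mmat n s x j i = 0 := by
      simp [Mmat, (hji.ne).symm, not_lt.mpr hji.le]
    rw [h0, Finset.Ioc_eq_empty (not_lt.mpr hji.le), Finset.sum_empty]
    ring

lemma Nmat_mul_diag (s : Fin n → ℂ) (hs : Function.Injective s) (x : Fin n → Fin n → ℂ) :
    Nmat n s x * Matrix.diagonal s = Matrix.of (fun j i : Fin n =>
        if i = j then s i else if i < j then (s j - s i) * x j i else 0) * Nmat n s x := by
  ext j i
  rw [Matrix.mul_diagonal, Matrix.mul_apply]
  have hstep : ∀ k ∈ (univ : Finset (Fin n)),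
      Matrix.of (fun j i : Fin n =>
          if i = j then s i else if i < j then (s j - s i) * x j i else 0) j k * Nmat n s x k i
        = (if k = j then s j * Nmat n s x j i else 0)
          + (if k ∈ Ico i j then (s j - s k) * x j k * Nmat n s x k i else 0) := by
    intro k _
    by_cases hkj : k = j
    · subst hkj
      simp [Finset.mem_Ico]
    · rw [Matrix.of_apply, if_neg hkj]
      by_cases hklt : k < j
      · rw [if_pos hklt, if_neg hkj]
        by_cases hik : i ≤ k
        · rw [if_pos (Finset.mem_Ico.mpr ⟨hik, hklt⟩), zero_add]
        · have hki : k < i := not_le.mp hik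
          rw [if_neg (by rw [Finset.mem_Ico]; exact fun h => hik h.1)]
          rw [show Nmat n s x k i = 0 by
            simp [Nmat, hki.ne', not_lt.mpr hki.le]]
          simp
      · rw [if_neg hklt, if_neg hkj,
          if_neg (by rw [Finset.mem_Ico]; exact fun h => hklt h.2)]
        simp
  rw [Finset.sum_congr rfl hstep, Finset.sum_add_distrib]
  rw [Finset.sum_ite_eq' univ j (fun _ => s j * Nmat n s x j i), if_pos (Finset.mem_univ _)]
  rw [Finset.sum_ite_mem, Finset.univ_inter]
  rcases lt_trichotomy i j with hij | rfl | hji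
  · have hd : s i - s j ≠ 0 := sub_ne_zero.mpr (fun h => absurd (hs h) hij.ne)
    have hNji : Nmat n s x j i
        = chainSum (fun a b => -((s a - s b) / (s i - s b)) * x b a) i j := by
      simp only [Nmat, Matrix.of_apply]
      rw [if_neg hij.ne, if_pos hij]
    have hNk : ∀ k ∈ Ico i j, (s j - s k) * x j k * Nmat n s x k i
        = (s j - s k) * x j k
            * chainSum (fun a b => -((s a - s b) / (s i - s b)) * x b a) i k := by
      intro k hk
      obtain ⟨hik, hkj⟩ := Finset.mem_Ico.mp hk
      rcases eq_or_lt_of_le hik with rfl | h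
      · rw [show Nmat n s x i i = 1 by simp [Nmat], chainSum_self]
      · have he : Nmat n s x k i
            = chainSum (fun a b => -((s a - s b) / (s i - s b)) * x b a) i k := by
          simp only [Nmat, Matrix.of_apply]
          rw [if_neg h.ne, if_pos h]
        rw [he]
    rw [Finset.sum_congr rfl hNk, hNji, chainSum_rec_right _ hij, Finset.sum_mul,
      Finset.mul_sum, ← Finset.sum_add_distrib]
    refine Finset.sum_congr rfl fun a _ => ?_
    field_simp
    ring
  · have h1 : Nmat n s x i i = 1 := by simp [Nmat]
    rw [h1, Finset.Ico_self, Finset.sum_empty]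
    ring
  · have h0 : Nmat n s x j i = 0 := by
      simp [Nmat, hji.ne', not_lt.mpr hji.le]
    rw [h0, Finset.Ico_eq_empty (not_lt.mpr hji.le), Finset.sum_empty]
    ring

lemma Mmat_mul_Nmat (s : Fin n → ℂ) (hs : Function.Injective s) (x : Fin n → Fin n → ℂ) :
    Mmat n s x * Nmat n s x = 1 := by
  have hcomm : Matrix.diagonal s * (Mmat n s x * Nmat n s x)
      = (Mmat n s x * Nmat n s x) * Matrix.diagonal s := by
    rw [← Matrix.mul_assoc, diag_mul_Mmat s hs x, Matrix.mul_assoc, ← Nmat_mul_diag s hs x,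
      ← Matrix.mul_assoc]
  ext j i
  have hent := congrFun (congrFun hcomm j) i
  rw [Matrix.diagonal_mul, Matrix.mul_diagonal] at hent
  by_cases hij : i = j
  · subst hij
    rw [Matrix.mul_apply, Matrix.one_apply_eq]
    rw [Finset.sum_eq_single i]
    · simp [Mmat, Nmat]
    · intro k _ hk
      rcases lt_or_gt_of_ne hk with h | h
      · rw [show Nmat n s x k i = 0 by simp [Nmat, h.ne', not_lt.mpr h.le], mul_zero]
      · rw [show Mmat n s x i k = 0 by simp [Mmat, h.ne', not_lt.mpr h.le], zero_mul]
    · intro h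
      exact absurd (Finset.mem_univ i) h
  · have hsij : s j - s i ≠ 0 := sub_ne_zero.mpr (fun h => hij (hs h).symm)
    have : (s j - s i) * (Mmat n s x * Nmat n s x) j i = 0 := by
      rw [sub_mul, hent]
      ring
    rw [Matrix.one_apply_ne (Ne.symm hij)]
    exact (mul_eq_zero.mp this).resolve_left hsij

/-- second part of Lemma B.2: with `D = diag(s_1, ..., s_n)`, the conjugate
`N · D · M` has diagonal entries `s_i`, strictly-lower entries `(N D M)_{ji} = (s_j − s_i) x_{ji}`
for `i < j`, and vanishing strictly-upper entries. -/
theorem Nmat_diag_Mmat (n : ℕ) (hn : 1 ≤ n) (s : Fin n → ℂ)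
    (hs : Function.Injective s) (x : Fin n → Fin n → ℂ) :
    Nmat n s x * Matrix.diagonal s * Mmat n s x =
      Matrix.of (fun j i : Fin n =>
        if i = j then s i
        else if i < j then (s j - s i) * x j i
        else 0) := by
  have hNM : Nmat n s x * Mmat n s x = 1 :=
    mul_eq_one_comm.mp (Mmat_mul_Nmat s hs x)
  rw [Matrix.mul_assoc, diag_mul_Mmat s hs x, ← Matrix.mul_assoc, hNM, Matrix.one_mul]
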